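/- Let B ⊆ ℝ^d be a convex body, let X be a set of M ≥ 2 distinct points of B, and let z ∈ B \ X. Then z ∈ Keep(X;B) if and only if there exists x ∈ X such that F({z} ∪ (X \ {x})) < F(X). -/
import Mathlib


open Finset Metric MeasureTheory
open scoped BigOperators ENNReal RealInnerProductSpace

noncomputable section

instance {d : ℕ} : DecidableEq (EuclideanSpace ℝ (Fin d)) := Classical.decEq _

/-- `E d` is the Euclidean space `ℝ^d`. -/
abbrev E (d : ℕ) : Type := EuclideanSpace ℝ (Fin d)

/-- `Σ(X)`, the sum of the points of `X`. -/
def csum {d : ℕ} (X : Finset (E d)) : E d := ∑ x ∈ X, x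

/-- `μ(X)`, the center of mass of `X`. -/
def cm {d : ℕ} (X : Finset (E d)) : E d := (X.card : ℝ)⁻¹ • csum X

/-- `F(X) = Σ_{i<j} ‖x_i - x_j‖²`, the moment of inertia of `X`. -/
def inertia {d : ℕ} (X : Finset (E d)) : ℝ := (∑ x ∈ X, ∑ y ∈ X, ‖x - y‖ ^ 2) / 2

/-- `A(X) = max_{w ∈ X} ‖w - μ(X)‖`. -/
def Amax {d : ℕ} (X : Finset (E d)) : ℝ := sSup ((fun w => ‖w - cm X‖) '' (X : Set (E d)))

/-- `D(X) = max_{i ≠ j} ‖x_i - x_j‖`. -/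
def Dmax {d : ℕ} (X : Finset (E d)) : ℝ :=
  sSup {r : ℝ | ∃ x ∈ X, ∃ y ∈ X, x ≠ y ∧ r = ‖x - y‖}

/-- `d(X) = min_{i ≠ j} ‖x_i - x_j‖`. -/
def dmin {d : ℕ} (X : Finset (E d)) : ℝ :=
  sInf {r : ℝ | ∃ x ∈ X, ∃ y ∈ X, x ≠ y ∧ r = ‖x - y‖}

/-- `Keep(X;B) = { x ∈ B : ‖x - μ({x} ∪ X)‖ < max_{s ∈ X} ‖s - μ({x} ∪ X)‖ }`. -/
def Keep {d : ℕ} (X : Finset (E d)) (B : Set (E d)) : Set (E d) :=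
  {x ∈ B | ‖x - cm (insert x X)‖ <
    sSup ((fun s => ‖s - cm (insert x X)‖) '' (X : Set (E d)))}

/-- `V(k)`, the Lebesgue measure of the unit ball in `ℝ^k` (so `V 0 = 1`). -/
def ubVol (k : ℕ) : ℝ := (volume (Metric.ball (0 : EuclideanSpace ℝ (Fin k)) 1)).toReal


private lemma inertia_eq' {d : ℕ} (X : Finset (E d)) :
    inertia X = X.card * ∑ x ∈ X, ‖x‖^2 - ‖csum X‖^2 := by
  unfold inertia csum
  have h : ∀ a ∈ X, ∀ b ∈ X, ‖a - b‖^2 = ‖a‖^2 - 2*⟪a,b⟫ + ‖b‖^2 :=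
    fun a _ b _ => norm_sub_sq_real a b
  rw [Finset.sum_congr rfl (fun a ha => Finset.sum_congr rfl (h a ha))]
  have e1 : ∀ a ∈ X, ∑ b ∈ X, (‖a‖^2 - 2*⟪a,b⟫ + ‖b‖^2)
      = X.card * ‖a‖^2 - 2*⟪a, ∑ b ∈ X, b⟫ + ∑ b ∈ X, ‖b‖^2 := by
    intro a _
    rw [inner_sum]
    simp [Finset.sum_add_distrib, Finset.sum_sub_distrib, Finset.mul_sum]
  rw [Finset.sum_congr rfl e1]
  have e2 : ∑ x ∈ X, (2*⟪x, ∑ b ∈ X, b⟫) = 2 * ‖∑ x ∈ X, x‖^2 := by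
    rw [← Finset.mul_sum, ← sum_inner, real_inner_self_eq_norm_sq]
  rw [Finset.sum_add_distrib, Finset.sum_sub_distrib, e2, ← Finset.mul_sum,
    Finset.sum_const, nsmul_eq_mul]
  ring

private lemma key_iff {d : ℕ} (X : Finset (E d)) (hX : 2 ≤ X.card) (z : E d) (hz : z ∉ X)
    (x : E d) (hx : x ∈ X) :
    (inertia (insert z (X.erase x)) < inertia X ↔
      ‖z - cm (insert z X)‖ < ‖x - cm (insert z X)‖) := by
  have hzx : z ∉ X.erase x := fun h => hz (Finset.mem_of_mem_erase h)
  have hcard1 : (insert z (X.erase x)).card = X.card := by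
    rw [Finset.card_insert_of_notMem hzx, Finset.card_erase_of_mem hx]
    omega
  have hcard2 : (insert z X).card = X.card + 1 := Finset.card_insert_of_notMem hz
  have hsum1 : csum (insert z (X.erase x)) = (z + csum X) - x := by
    unfold csum
    rw [Finset.sum_insert hzx, Finset.sum_erase_eq_sub hx]
    abel
  have hsum2 : csum (insert z X) = z + csum X := by
    unfold csum; rw [Finset.sum_insert hz]
  have hQ : ∑ w ∈ insert z (X.erase x), ‖w‖^2 = ‖z‖^2 + ((∑ w ∈ X, ‖w‖^2) - ‖x‖^2) := by
    rw [Finset.sum_insert hzx, Finset.sum_erase_eq_sub hx]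
  set M : ℝ := (X.card : ℝ) with hM
  have hc : (0:ℝ) < M + 1 := by
    have : (0:ℝ) ≤ M := Nat.cast_nonneg _
    linarith
  have hmu : cm (insert z X) = (M+1)⁻¹ • (z + csum X) := by
    unfold cm; rw [hcard2, hsum2]; push_cast; rfl
  set μ := cm (insert z X) with hμ
  have keyeq : inertia (insert z (X.erase x)) - inertia X
      = (M+1) * (‖z - μ‖^2 - ‖x - μ‖^2) := by
    rw [inertia_eq', inertia_eq', hcard1, hsum1, hQ, hmu]
    simp only [norm_sub_sq_real, norm_add_sq_real, real_inner_smul_right,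
      inner_add_right, inner_add_left, real_inner_self_eq_norm_sq,
      real_inner_comm x z, real_inner_comm (csum X) z, real_inner_comm (csum X) x]
    field_simp
    ring
  have hsq : ‖z - μ‖^2 < ‖x - μ‖^2 ↔ ‖z - μ‖ < ‖x - μ‖ :=
    pow_lt_pow_iff_left₀ (norm_nonneg _) (norm_nonneg _) two_ne_zero
  rw [← hsq]
  constructor <;> intro h <;> nlinarith [keyeq]

/-- A point `z ∈ B \ X` belongs to `Keep(X;B)` iff replacing some point of `X`
by `z` strictly decreases the moment of inertia. -/
theorem stmt_1 (d : ℕ) (B : Set (E d))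
    (hBconv : Convex ℝ B) (hBcl : IsClosed B) (hBint : (interior B).Nonempty)
    (X : Finset (E d)) (hX : 2 ≤ X.card) (hXB : ↑X ⊆ B)
    (z : E d) (hzB : z ∈ B) (hz : z ∉ X) :
    z ∈ Keep X B ↔ ∃ x ∈ X, inertia (insert z (X.erase x)) < inertia X := by
  have hXne : (X : Set (E d)).Nonempty := by
    rcases Finset.card_pos.mp (by omega : 0 < X.card) with ⟨a, ha⟩
    exact ⟨a, ha⟩
  set μ := cm (insert z X) with hμ
  set T : Set ℝ := (fun s => ‖s - μ‖) '' (X : Set (E d)) with hT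
  have hTfin : T.Finite := (X.finite_toSet).image _
  have hTne : T.Nonempty := hXne.image _
  constructor
  · rintro ⟨-, hlt⟩
    obtain ⟨x, hxX, hxeq⟩ := hTne.csSup_mem hTfin
    refine ⟨x, hxX, (key_iff X hX z hz x hxX).mpr ?_⟩
    simp only at hxeq
    rw [hxeq]
    exact hlt
  · rintro ⟨x, hxX, hF⟩
    refine ⟨hzB, lt_of_lt_of_le ((key_iff X hX z hz x hxX).mp hF) ?_⟩
    exact le_csSup hTfin.bddAbove ⟨x, hxX, rfl⟩
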